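/- Let X ~ N(0, h) with h > 0, and E_c := exp(c·X − c²h/2) for c ∈ ℂ. Then for every fixed c ∈ ℂ, (E_r − 1)/r · E_c converges to X·E_c in L²(Ω) as the real parameter r → 0. -/

import Mathlib

open MeasureTheory ProbabilityTheory Complex Filter NNReal
open scoped Real

lemma aux_exp_sub_one (t : ℝ) : |Real.exp t - 1| ≤ |t| * Real.exp |t| := by
  rcases le_or_gt 0 t with ht | ht
  · rw [_root_.abs_of_nonneg ht, _root_.abs_of_nonneg (sub_nonneg.2 (Real.one_le_exp ht))]
    have h0 : -t + 1 ≤ (Real.exp t)⁻¹ := by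
      rw [← Real.exp_neg]; exact Real.add_one_le_exp (-t)
    have h1 : (-t + 1) * Real.exp t ≤ 1 := by
      calc (-t + 1) * Real.exp t ≤ (Real.exp t)⁻¹ * Real.exp t :=
            mul_le_mul_of_nonneg_right h0 (Real.exp_pos t).le
        _ = 1 := inv_mul_cancel₀ (Real.exp_pos t).ne'
    nlinarith
  · rw [abs_of_neg ht, abs_of_nonpos (sub_nonpos.2 (Real.exp_le_one_iff.2 ht.le))]
    nlinarith [Real.add_one_le_exp t, Real.one_le_exp (neg_nonneg.2 ht.le)]

lemma aux_integrable (h : ℝ≥0) (hpos : 0 < h) (D : ℝ) :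
    Integrable (fun x : ℝ => Real.exp (D * |x|)) (gaussianReal 0 h) := by
  have hh : (0:ℝ) < (h:ℝ) := hpos
  rw [gaussianReal_of_var_ne_zero 0 hpos.ne']
  rw [integrable_withDensity_iff (measurable_gaussianPDF 0 h)
    (ae_of_all _ fun x => ENNReal.ofReal_lt_top)]
  have hmeas : AEStronglyMeasurable
      (fun x : ℝ => Real.exp (D * |x|) * (gaussianPDF 0 h x).toReal) volume := by
    refine AEStronglyMeasurable.mul ?_ ?_
    · exact (Real.measurable_exp.comp (measurable_abs.const_mul D)).aestronglyMeasurable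
    · exact ((measurable_gaussianPDF 0 h).ennreal_toReal).aestronglyMeasurable
  refine Integrable.mono' (g := fun x : ℝ =>
      (Real.sqrt (2 * π * h))⁻¹ * Real.exp (D^2 * h) * Real.exp (-(4*(h:ℝ))⁻¹ * x^2))
    ?_ hmeas (ae_of_all _ fun x => ?_)
  · exact ((integrable_exp_neg_mul_sq (by positivity)).const_mul _)
  · rw [Real.norm_eq_abs, _root_.abs_of_nonneg (mul_nonneg (Real.exp_nonneg _) ENNReal.toReal_nonneg)]
    rw [gaussianPDF, ENNReal.toReal_ofReal (gaussianPDFReal_nonneg 0 h x), gaussianPDFReal]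
    simp only [sub_zero]
    have q2 : D*|x| - D^2*(h:ℝ) ≤ x^2/(4*(h:ℝ)) := by
      rw [le_div_iff₀ (by positivity : (0:ℝ) < 4*(h:ℝ))]
      nlinarith [sq_nonneg (|x| - 2*D*(h:ℝ)), _root_.sq_abs x]
    have e2 : x^2/(4*(h:ℝ)) - x^2/(2*(h:ℝ)) = -((4*(h:ℝ))⁻¹*x^2) := by
      field_simp; ring
    calc Real.exp (D*|x|) * ((Real.sqrt (2*π*(h:ℝ)))⁻¹ * Real.exp (-x^2/(2*(h:ℝ))))
        = (Real.sqrt (2*π*(h:ℝ)))⁻¹ * Real.exp (D*|x| + -x^2/(2*(h:ℝ))) := by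
          rw [Real.exp_add]; ring
      _ ≤ (Real.sqrt (2*π*(h:ℝ)))⁻¹ * Real.exp (D^2*(h:ℝ) + -(4*(h:ℝ))⁻¹*x^2) := by
          refine mul_le_mul_of_nonneg_left (Real.exp_le_exp.2 ?_) (inv_nonneg.2 (Real.sqrt_nonneg _))
          have e3 : -x^2/(2*(h:ℝ)) = -(x^2/(2*(h:ℝ))) := by ring
          rw [e3]
          linarith [q2, e2]
      _ = (Real.sqrt (2*π*(h:ℝ)))⁻¹ * Real.exp (D^2*(h:ℝ)) * Real.exp (-(4*(h:ℝ))⁻¹*x^2) := by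
          rw [Real.exp_add]; ring

lemma aux_norm_bound (h : ℝ) (hh : 0 ≤ h) (c : ℂ) (x r : ℝ) (hr : r ≠ 0) (hr1 : |r| ≤ 1) :
    ‖(Complex.exp ((r : ℂ) * x - (r : ℂ) ^ 2 * h / 2) - 1) / (r : ℂ) *
        Complex.exp (c * x - c ^ 2 * h / 2) - (x : ℂ) * Complex.exp (c * x - c ^ 2 * h / 2)‖
      ≤ ((2 + h/2) * Real.exp (h/2 + ‖c‖^2*h/2)) * Real.exp ((2+‖c‖)*|x|) := by
  set t : ℝ := r * x - r ^ 2 * h / 2 with ht_def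
  have hz : (r : ℂ) * x - (r : ℂ) ^ 2 * (h:ℝ) / 2 = ((t : ℝ) : ℂ) := by
    push_cast [ht_def]; ring
  set E := Complex.exp (c * x - c ^ 2 * (h:ℝ) / 2) with hE_def
  -- bound on ‖E‖
  have hE : ‖E‖ ≤ Real.exp (‖c‖ * |x| + ‖c‖ ^ 2 * h / 2) := by
    rw [hE_def, Complex.norm_exp]
    apply Real.exp_le_exp.2
    have hre : (c * (x:ℂ) - c ^ 2 * (h:ℝ) / 2).re = c.re * x - (c^2).re * h / 2 := by
      simp [Complex.sub_re, Complex.mul_re, Complex.div_re, Complex.ofReal_re,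
        Complex.ofReal_im, Complex.normSq]
      try ring
    rw [hre]
    have h1 : c.re * x ≤ ‖c‖ * |x| := by
      calc c.re * x ≤ |c.re * x| := le_abs_self _
        _ = |c.re| * |x| := abs_mul _ _
        _ ≤ ‖c‖ * |x| := by
            exact mul_le_mul_of_nonneg_right (Complex.abs_re_le_norm c) (abs_nonneg x)
    have h2 : -((c^2).re * h / 2) ≤ ‖c‖^2 * h / 2 := by
      have : |(c^2).re| ≤ ‖c‖^2 := by
        calc |(c^2).re| ≤ ‖c^2‖ := Complex.abs_re_le_norm _
          _ = ‖c‖^2 := by rw [norm_pow]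
      nlinarith [this, neg_abs_le (c^2).re, hh]
    linarith
  rw [hz, ← sub_mul, norm_mul]
  have hA : ‖(Complex.exp ((t:ℝ):ℂ) - 1) / (r : ℂ) - (x:ℂ)‖
      ≤ (|x| + h/2) * Real.exp (|x| + h/2) + |x| := by
    refine le_trans (norm_sub_le _ _) ?_
    have hxn : ‖(x:ℂ)‖ = |x| := by rw [Complex.norm_real, Real.norm_eq_abs]
    rw [hxn]
    gcongr
    rw [norm_div, Complex.norm_real, Real.norm_eq_abs]
    have : Complex.exp ((t:ℝ):ℂ) - 1 = ((Real.exp t - 1 : ℝ) : ℂ) := by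
      push_cast
      ring
    rw [this, Complex.norm_real, Real.norm_eq_abs]
    rw [div_le_iff₀ (abs_pos.2 hr)]
    have h1 : |Real.exp t - 1| ≤ |t| * Real.exp |t| := aux_exp_sub_one t
    have ht1 : |t| ≤ |r| * (|x| + h/2) := by
      calc |t| ≤ |r * x| + |r^2 * h / 2| := abs_sub (r*x) (r^2*h/2)
        _ = |r| * |x| + r^2 * h / 2 := by
            rw [abs_mul, _root_.abs_of_nonneg (by positivity : (0:ℝ) ≤ r^2*h/2)]
        _ ≤ |r| * |x| + |r| * (h/2) := by
            have : r^2 ≤ |r| := by nlinarith [_root_.sq_abs r, abs_nonneg r]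
            nlinarith
        _ = |r| * (|x| + h/2) := by ring
    have ht2 : |t| ≤ |x| + h/2 :=
      ht1.trans (show |r| * (|x| + h/2) ≤ |x| + h/2 by nlinarith [abs_nonneg x, hh])
    calc |Real.exp t - 1| ≤ |t| * Real.exp |t| := h1
      _ ≤ (|r| * (|x| + h/2)) * Real.exp (|x| + h/2) := by
          exact mul_le_mul ht1 (Real.exp_le_exp.2 ht2) (Real.exp_nonneg _)
            (by positivity)
      _ = (|x| + h/2) * Real.exp (|x| + h/2) * |r| := by ring
  calc ‖(Complex.exp ((t:ℝ):ℂ) - 1) / (r : ℂ) - (x:ℂ)‖ * ‖E‖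
      ≤ ((|x| + h/2) * Real.exp (|x| + h/2) + |x|) * Real.exp (‖c‖ * |x| + ‖c‖^2*h/2) := by
        exact mul_le_mul hA hE (norm_nonneg _) (by positivity)
    _ ≤ ((2 + h/2) * Real.exp |x| * Real.exp (|x| + h/2)) * Real.exp (‖c‖ * |x| + ‖c‖^2*h/2) := by
        have hEx : |x| ≤ Real.exp |x| := by linarith [Real.add_one_le_exp |x|]
        have h1a : (1:ℝ) ≤ Real.exp (|x| + h/2) := Real.one_le_exp (by positivity)
        have h1x : (1:ℝ) ≤ Real.exp |x| := Real.one_le_exp (abs_nonneg x)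
        have step : (|x| + h/2) * Real.exp (|x| + h/2) + |x|
            ≤ (2 + h/2) * Real.exp |x| * Real.exp (|x| + h/2) := by
          nlinarith [mul_le_mul_of_nonneg_right hEx (le_trans zero_le_one h1a),
            mul_le_mul_of_nonneg_right h1x (Real.exp_nonneg (|x| + h/2)),
            Real.exp_nonneg (|x| + h/2), Real.exp_nonneg |x|, abs_nonneg x]
        exact mul_le_mul_of_nonneg_right step (Real.exp_nonneg _)
    _ = ((2 + h/2) * Real.exp (h/2 + ‖c‖^2*h/2)) * Real.exp ((2+‖c‖)*|x|) := by
        rw [mul_assoc ((2:ℝ) + h/2), mul_assoc, ← Real.exp_add, ← Real.exp_add,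
          mul_assoc ((2:ℝ) + h/2), ← Real.exp_add]
        congr 2
        ring



/-- (E_r - 1)/r · E_c → X·E_c in L² as the real parameter r → 0. -/
theorem stmt_6 {Ω : Type*} [MeasurableSpace Ω] (P : Measure Ω) [IsProbabilityMeasure P]
    (X : Ω → ℝ) (hX : Measurable X) (h : ℝ≥0) (hpos : 0 < h)
    (hlaw : Measure.map X P = gaussianReal 0 h) (c : ℂ) :
    Tendsto
      (fun r : ℝ => ∫ ω, ‖(Complex.exp ((r : ℂ) * X ω - (r : ℂ) ^ 2 * (h : ℝ) / 2) - 1) / (r : ℂ) *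
          Complex.exp (c * X ω - c ^ 2 * (h : ℝ) / 2) -
          (X ω : ℂ) * Complex.exp (c * X ω - c ^ 2 * (h : ℝ) / 2)‖ ^ 2 ∂P)
      (nhdsWithin 0 {0}ᶜ) (nhds 0) := by
  have hh : (0:ℝ) ≤ (h:ℝ) := h.coe_nonneg
  set A : ℝ := ((2 + (h:ℝ)/2) * Real.exp ((h:ℝ)/2 + ‖c‖^2*(h:ℝ)/2)) with hA_def
  set D : ℝ := 2 * (2 + ‖c‖) with hD_def
  -- integrable bound
  have hbound_int : Integrable (fun ω => A^2 * Real.exp (D * |X ω|)) P := by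
    have h1 : Integrable (fun x : ℝ => Real.exp (D * |x|)) (Measure.map X P) := by
      rw [hlaw]; exact aux_integrable h hpos D
    have h2 : Integrable (fun ω => Real.exp (D * |X ω|)) P := by
      have := (integrable_map_measure
        (f := X) (g := fun x : ℝ => Real.exp (D * |x|))
        ((Real.measurable_exp.comp (measurable_abs.const_mul D)).aestronglyMeasurable)
        hX.aemeasurable).mp h1
      exact this
    exact h2.const_mul _
  have main : Tendsto
      (fun r : ℝ => ∫ ω, ‖(Complex.exp ((r : ℂ) * X ω - (r : ℂ) ^ 2 * (h : ℝ) / 2) - 1) / (r : ℂ) *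
          Complex.exp (c * X ω - c ^ 2 * (h : ℝ) / 2) -
          (X ω : ℂ) * Complex.exp (c * X ω - c ^ 2 * (h : ℝ) / 2)‖ ^ 2 ∂P)
      (nhdsWithin 0 {0}ᶜ) (nhds (∫ (_ : Ω), (0:ℝ) ∂P)) := by
    refine tendsto_integral_filter_of_dominated_convergence
      (fun ω => A^2 * Real.exp (D * |X ω|)) ?_ ?_ hbound_int ?_
    · -- a.e. strong measurability
      filter_upwards with r
      apply Measurable.aestronglyMeasurable
      have hm : Measurable fun ω =>
          (Complex.exp ((r : ℂ) * X ω - (r : ℂ) ^ 2 * (h : ℝ) / 2) - 1) / (r : ℂ) *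
            Complex.exp (c * X ω - c ^ 2 * (h : ℝ) / 2) -
            (X ω : ℂ) * Complex.exp (c * X ω - c ^ 2 * (h : ℝ) / 2) := by
        have hXc : Measurable fun ω => (X ω : ℂ) := Complex.measurable_ofReal.comp hX
        fun_prop
      exact (hm.norm.pow_const 2)
    · -- bound
      have hev : ∀ᶠ r in nhdsWithin (0:ℝ) {0}ᶜ, r ≠ 0 ∧ |r| ≤ 1 := by
        filter_upwards [self_mem_nhdsWithin,
          nhdsWithin_le_nhds (eventually_abs_sub_lt (0:ℝ) one_pos)] with r h1 h2
        refine ⟨h1, ?_⟩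
        simpa using h2.le
      filter_upwards [hev] with r hr
      filter_upwards with ω
      rw [Real.norm_eq_abs, _root_.abs_of_nonneg (by positivity)]
      have key := aux_norm_bound (h:ℝ) hh c (X ω) r hr.1 hr.2
      calc ‖_‖^2 ≤ (A * Real.exp ((2+‖c‖)*|X ω|))^2 := by
            apply pow_le_pow_left₀ (norm_nonneg _) key
        _ = A^2 * Real.exp (D * |X ω|) := by
            rw [mul_pow]
            congr 1
            rw [sq, ← Real.exp_add, hD_def]
            congr 1
            ring
    · -- pointwise limit
      filter_upwards with ω
      set x : ℝ := X ω
      set E : ℂ := Complex.exp (c * x - c ^ 2 * (h:ℝ) / 2) with hE_def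
      have hinner : HasDerivAt (fun z : ℂ => z * x - z^2 * (h:ℝ) / 2) ((x:ℂ)) 0 := by
        have h1 : HasDerivAt (fun z : ℂ => z * (x:ℂ)) ((x:ℂ)) 0 :=
          (hasDerivAt_id (0:ℂ)).mul_const _ |>.congr_deriv (by simp)
        have h2 : HasDerivAt (fun z : ℂ => z^2 * ((h:ℝ):ℂ) / 2) 0 0 := by
          have := ((hasDerivAt_pow 2 (0:ℂ)).mul_const ((h:ℝ):ℂ)).div_const 2
          simpa using this
        have := h1.sub h2
        rw [sub_zero] at this
        exact this
      have hexp : HasDerivAt (fun z : ℂ => Complex.exp (z * x - z^2 * (h:ℝ) / 2)) ((x:ℂ)) 0 := by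
        have := hinner.cexp
        simpa using this
      have hreal : HasDerivAt (fun r : ℝ => Complex.exp ((r:ℂ) * x - (r:ℂ)^2 * (h:ℝ) / 2))
          ((x:ℂ)) 0 := by
        have := hexp.comp_ofReal
        simpa using this
      have hslope := hasDerivAt_iff_tendsto_slope.mp hreal
      have heq : ∀ r : ℝ, r ≠ 0 → slope (fun r : ℝ => Complex.exp ((r:ℂ) * x - (r:ℂ)^2 * (h:ℝ) / 2)) 0 r
          = (Complex.exp ((r:ℂ) * x - (r:ℂ)^2 * (h:ℝ) / 2) - 1) / (r : ℂ) := by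
        intro r hr
        rw [slope_def_module, sub_zero, Complex.real_smul, Complex.ofReal_inv]
        have h00 : Complex.exp ((0:ℝ) * (x:ℂ) - ((0:ℝ):ℂ)^2 * ((h:ℝ):ℂ) / 2) = 1 := by
          norm_num
        simp only [Complex.ofReal_zero, zero_mul, ne_eq, OfNat.ofNat_ne_zero,
          not_false_eq_true, zero_pow, sub_zero]
        norm_num [Complex.exp_zero, div_eq_inv_mul]
      have hT : Tendsto (fun r : ℝ =>
          (Complex.exp ((r:ℂ) * x - (r:ℂ)^2 * (h:ℝ) / 2) - 1) / (r : ℂ))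
          (nhdsWithin 0 {0}ᶜ) (nhds ((x:ℂ))) := by
        refine hslope.congr' ?_
        filter_upwards [self_mem_nhdsWithin] with r hr
        exact heq r hr
      have hfin := ((hT.mul_const E).sub (tendsto_const_nhds
        (x := (x:ℂ) * E))).norm.pow 2
      simpa using hfin

  rw [integral_zero] at main
  exact main
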